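/- Let L|K be a finite extension of fields of characteristic zero. Then L|K is a Galois extension if and only if 1 ⊗ L ⊆ (L ⊗ 1)·E(L ⊗_K L), where E(L ⊗_K L) is the set of idempotent elements of L ⊗_K L; that is, if and only if for every b ∈ L the element 1 ⊗ b is a finite sum Σ (aᵢ ⊗ 1)eᵢ with aᵢ ∈ L and eᵢ idempotents of L ⊗_K L. -/

import Mathlib

open scoped TensorProduct

/-- `S·T`: the set of finite sums `Σ sᵢ tᵢ` with `sᵢ ∈ S`, `tᵢ ∈ T`. -/
def dotSet {R : Type*} [CommRing R] (S T : Set R) : Set R :=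
  {x | ∃ (n : ℕ) (s t : Fin n → R), (∀ i, s i ∈ S) ∧ (∀ i, t i ∈ T) ∧ x = ∑ i, s i * t i}

section Aux

variable (K L : Type*) [Field K] [Field L] [Algebra K L] [FiniteDimensional K L]

/-- Forward direction: if `L/K` is Galois, then `1 ⊗ b` lies in the `L⊗1`-span of
idempotents. -/
theorem mem_dotSet_of_isGalois [IsGalois K L] (b : L) :
    (1 : L) ⊗ₜ[K] b ∈
      dotSet (Set.range fun a : L => a ⊗ₜ[K] (1 : L))
        {e : L ⊗[K] L | IsIdempotentElem e} := by
  classical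
  -- the algebra map `L ⊗[K] L →ₐ[L] ((L →ₐ[K] L) → L)`, `a ⊗ b ↦ (σ ↦ a * σ b)`
  set G := (L →ₐ[K] L)
  let f : L →ₐ[L] (G → L) := Algebra.ofId L _
  let g : L →ₐ[K] (G → L) := Pi.algHom K _ (fun σ : G => σ)
  let φ : L ⊗[K] L →ₐ[L] (G → L) :=
    Algebra.TensorProduct.lift f g (fun _ _ => Commute.all _ _)
  have hφ : ∀ (a c : L), φ (a ⊗ₜ[K] c) = fun σ : G => a * σ c := by
    intro a c
    ext σ
    simp [φ, f, g, Algebra.TensorProduct.lift_tmul, Algebra.ofId_apply,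
      Algebra.algebraMap_eq_smul_one, smul_eq_mul]
  -- the cardinality of `G`
  have equivHomAut : G ≃ (L ≃ₐ[K] L) :=
    { toFun := fun σ => AlgEquiv.ofBijective σ σ.bijective
      invFun := fun e => ↑e
      left_inv := fun σ => by ext x; rfl
      right_inv := fun e => by ext x; rfl }
  have hcard : Fintype.card G = Module.finrank K L := by
    rw [Fintype.card_congr equivHomAut, ← Nat.card_eq_fintype_card, IsGalois.card_aut_eq_finrank]
  -- surjectivity of `φ`
  have hsurj : Function.Surjective φ := by
    have hrange : LinearMap.range (φ.toLinearMap : L ⊗[K] L →ₗ[L] (G → L)) = ⊤ := by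
      by_contra hne
      obtain ⟨c, hc0, hcbot⟩ :=
        Submodule.exists_dual_map_eq_bot_of_lt_top (lt_top_iff_ne_top.mpr hne) inferInstance
      have hc : ∀ x : L ⊗[K] L, c (φ x) = 0 := by
        intro x
        have : c (φ x) ∈ Submodule.map c
            (LinearMap.range (φ.toLinearMap : L ⊗[K] L →ₗ[L] (G → L))) :=
          Submodule.mem_map_of_mem ⟨x, rfl⟩
        rw [hcbot] at this
        exact (Submodule.mem_bot L).mp this
      set a : G → L := fun σ => c (fun τ : G => if σ = τ then 1 else 0) with ha
      have hsum : ∀ bb : L, ∑ σ : G, σ bb * a σ = 0 := by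
        intro bb
        have h1 : c (φ ((1 : L) ⊗ₜ[K] bb)) = 0 := hc _
        rw [hφ 1 bb] at h1
        rw [LinearMap.pi_apply_eq_sum_univ c (fun σ : G => 1 * σ bb)] at h1
        simpa [smul_eq_mul, mul_comm] using h1
      have hlin := linearIndependent_toLinearMap K L L
      have hzero : ∀ σ : G, a σ = 0 := by
        have := Fintype.linearIndependent_iff.mp hlin a ?_
        · exact this
        · ext bb
          simpa [LinearMap.sum_apply, smul_eq_mul, mul_comm] using hsum bb
      apply hc0
      refine LinearMap.ext fun x => ?_
      rw [LinearMap.pi_apply_eq_sum_univ c x]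
      refine Finset.sum_eq_zero fun σ _ => ?_
      rw [show (c fun j => if σ = j then 1 else 0) = 0 from hzero σ, smul_zero]
    intro y
    obtain ⟨x, hx⟩ := hrange ▸ Submodule.mem_top (x := y)
    exact ⟨x, hx⟩
  -- injectivity of `φ` by dimension count
  have hdim1 : Module.finrank L (L ⊗[K] L) = Module.finrank K L :=
    Module.finrank_baseChange
  have hdim2 : Module.finrank L (G → L) = Module.finrank K L := by
    rw [Module.finrank_pi, hcard]
  have hinj : Function.Injective φ := by
    have hsurj' : Function.Surjective (φ.toLinearMap : L ⊗[K] L →ₗ[L] (G → L)) := hsurj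
    have h1 := LinearMap.finrank_range_add_finrank_ker
      (φ.toLinearMap : L ⊗[K] L →ₗ[L] (G → L))
    rw [LinearMap.range_eq_top.mpr hsurj', finrank_top, hdim1, hdim2] at h1
    have h2 : Module.finrank L (LinearMap.ker (φ.toLinearMap : L ⊗[K] L →ₗ[L] (G → L))) = 0 := by
      omega
    have h3 : LinearMap.ker (φ.toLinearMap : L ⊗[K] L →ₗ[L] (G → L)) = ⊥ :=
      Submodule.finrank_eq_zero.mp h2
    exact LinearMap.ker_eq_bot.mp h3
  let E : (L ⊗[K] L) ≃ₐ[L] (G → L) := AlgEquiv.ofBijective φ ⟨hinj, hsurj⟩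
  have hE : ∀ x, E x = φ x := fun _ => rfl
  -- now produce the decomposition
  let n := Fintype.card G
  let eqv : Fin n ≃ G := (Fintype.equivFin G).symm
  refine ⟨n, fun i => ((eqv i) b) ⊗ₜ[K] (1 : L),
    fun i => E.symm (Pi.single (eqv i) 1), fun i => ⟨(eqv i) b, rfl⟩, ?_, ?_⟩
  · intro i
    have hsingle : IsIdempotentElem (Pi.single (eqv i) (1 : L) : G → L) := by
      simp [IsIdempotentElem, ← Pi.single_mul]
    show IsIdempotentElem (E.symm (Pi.single (eqv i) 1))
    unfold IsIdempotentElem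
    rw [← map_mul, hsingle]
  · apply E.injective
    rw [map_sum]
    have hterm : ∀ i, E (((eqv i) b) ⊗ₜ[K] (1 : L) * E.symm (Pi.single (eqv i) 1))
        = Pi.single (eqv i) ((eqv i) b) := by
      intro i
      rw [map_mul, E.apply_symm_apply, hE, hφ]
      ext τ
      rcases eq_or_ne (eqv i) τ with h | h
      · subst h; simp
      · simp [Pi.single_eq_of_ne' h]
    rw [Finset.sum_congr rfl (fun i _ => hterm i)]
    rw [hE, hφ]
    have hsum2 : ∑ i : Fin n, Pi.single (eqv i) ((eqv i) b) = fun σ : G => σ b := by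
      rw [← Finset.univ_sum_single (fun σ : G => σ b)]
      exact Fintype.sum_equiv eqv _ _ (fun i => rfl)
    rw [hsum2]
    ext σ
    simp

end Aux

/-- A finite extension `L|K` of fields of characteristic zero is Galois
iff `1 ⊗ L ⊆ (L ⊗ 1)·E(L ⊗_K L)`, where `E(L ⊗_K L)` denotes the set of idempotents of
`L ⊗_K L`: for every `b ∈ L` the element `1 ⊗ b` is a finite sum `Σ (aᵢ ⊗ 1)eᵢ` with
`aᵢ ∈ L` and `eᵢ` idempotent. -/
theorem isGalois_iff_idempotents
    (K L : Type*) [Field K] [CharZero K] [Field L] [CharZero L] [Algebra K L]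
    [FiniteDimensional K L] :
    IsGalois K L ↔
      ∀ b : L, (1 : L) ⊗ₜ[K] b ∈
        dotSet (Set.range fun a : L => a ⊗ₜ[K] (1 : L))
          {e : L ⊗[K] L | IsIdempotentElem e} := by
  constructor
  · intro _ b
    exact mem_dotSet_of_isGalois K L b
  · intro h
    classical
    -- separability from characteristic zero
    haveI : Algebra.IsSeparable K L := inferInstance
    -- key: every `K`-embedding of `L` into `AlgebraicClosure K` has range inside the
    -- range of any other embedding
    set M := AlgebraicClosure K
    have key : ∀ (ι σ : L →ₐ[K] M) (b : L), σ b ∈ ι.fieldRange := by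
      intro ι σ b
      obtain ⟨n, s, t, hs, ht, hsum⟩ := h b
      choose a ha using hs
      let ψ : L ⊗[K] L →ₐ[K] M := Algebra.TensorProduct.productMap ι σ
      have hψt : ∀ i, ψ (t i) = 0 ∨ ψ (t i) = 1 := by
        intro i
        exact IsIdempotentElem.iff_eq_zero_or_one.mp ((ht i).map ψ)
      have hs' : ∀ i, ψ (s i) = ι (a i) := by
        intro i
        rw [← ha i]
        show ψ (a i ⊗ₜ[K] 1) = ι (a i)
        rw [Algebra.TensorProduct.productMap_apply_tmul, map_one, mul_one]
      have hterm : ∀ i, ψ (s i) * ψ (t i) = ι (if ψ (t i) = 1 then a i else 0) := by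
        intro i
        by_cases hc : ψ (t i) = 1
        · rw [if_pos hc, hc, mul_one, hs' i]
        · have h0 : ψ (t i) = 0 := (hψt i).resolve_right hc
          rw [if_neg hc, h0, mul_zero, map_zero]
      have : σ b = ι (∑ i, if ψ (t i) = 1 then a i else 0) := by
        have h1 : ψ ((1 : L) ⊗ₜ[K] b) = σ b := by
          rw [Algebra.TensorProduct.productMap_apply_tmul, map_one, one_mul]
        rw [← h1, hsum, map_sum, map_sum]
        exact Finset.sum_congr rfl fun i _ => by rw [map_mul, hterm i]
      exact this ▸ ⟨_, rfl⟩
    -- deduce normality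
    have : Algebra.IsAlgebraic K L := Algebra.IsAlgebraic.of_finite K L
    let ι : L →ₐ[K] M := IsAlgClosed.lift
    let E : IntermediateField K M := ι.fieldRange
    let eL : L ≃ₐ[K] E := AlgEquiv.ofInjectiveField ι
    have hEnormal : Normal K E := by
      rw [IntermediateField.normal_iff_forall_fieldRange_le]
      intro σE y hy
      obtain ⟨x, rfl⟩ := hy
      show σE x ∈ ι.fieldRange
      have hk := key ι (σE.comp eL.toAlgHom) (eL.symm x)
      simpa using hk
    have hnormal : Normal K L := Normal.of_algEquiv eL.symm
    exact { to_isSeparable := inferInstance, to_normal := hnormal }
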